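/- Let [C_1,…,C_r] be the W-characteristic set of ⟨P⟩ under the stated variable ordering. For any 1 ≤ k < r, if C_k = [C_1,…,C_k] is normal and the initial I_{k+1} = ini(C_{k+1}), with lv(I_{k+1}) = y_l, is not R-reduced with respect to C_l, then prem(I_{k+1}, C_k) = 0 and prem(C_{k+1}, C_k) = 0. -/

import Mathlib

open MvPolynomial

namespace CharSets

variable {n : ℕ} {K : Type*} [Field K]

/-- The coefficient of `x_i ^ d` in `F`, as a polynomial in the remaining variables. -/
noncomputable def coefv (i : Fin n) (d : ℕ) (F : MvPolynomial (Fin n) K) :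
    MvPolynomial (Fin n) K :=
  ∑ m ∈ F.support.filter (fun m => m i = d), monomial (Finsupp.erase i m) (F.coeff m)

/-- The leading coefficient of `F` with respect to the variable `x_i`. -/
noncomputable def lcv (i : Fin n) (F : MvPolynomial (Fin n) K) : MvPolynomial (Fin n) K :=
  coefv i (F.degreeOf i) F

/-- Auxiliary pseudo-division: computes (pseudo-quotient, pseudo-remainder) pairs,
with the first argument as fuel; the total power of the leading coefficient used is
exactly the fuel, so that starting with fuel `max(l - m + 1, 0)` yields the pair
`(Q, R)` of the unique representation `lc(F,x_i)^q • G = Q*F + R` with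
`q = max(l - m + 1, 0)` and `deg(R, x_i) < deg(F, x_i)`. -/
noncomputable def pdivAux (i : Fin n) (F : MvPolynomial (Fin n) K) :
    ℕ → MvPolynomial (Fin n) K × MvPolynomial (Fin n) K →
      MvPolynomial (Fin n) K × MvPolynomial (Fin n) K
  | 0, QR => QR
  | q + 1, QR =>
    if (QR.2).degreeOf i < F.degreeOf i then
      (lcv i F ^ (q + 1) * QR.1, lcv i F ^ (q + 1) * QR.2)
    else
      pdivAux i F q
        (lcv i F * QR.1 +
            coefv i ((QR.2).degreeOf i) QR.2 * X i ^ ((QR.2).degreeOf i - F.degreeOf i),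
          lcv i F * QR.2 -
            coefv i ((QR.2).degreeOf i) QR.2 * X i ^ ((QR.2).degreeOf i - F.degreeOf i) * F)

/-- The pseudo-remainder `prem(G, F, x_i)`. -/
noncomputable def prem (G F : MvPolynomial (Fin n) K) (i : Fin n) : MvPolynomial (Fin n) K :=
  (pdivAux i F (G.degreeOf i + 1 - F.degreeOf i) (0, G)).2

/-- The pseudo-quotient `pquo(G, F, x_i)`. -/
noncomputable def pquo (G F : MvPolynomial (Fin n) K) (i : Fin n) : MvPolynomial (Fin n) K :=
  (pdivAux i F (G.degreeOf i + 1 - F.degreeOf i) (0, G)).1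

/-- The class of `P`: the largest index (1-based) of a variable actually occurring in `P`;
the class of a constant is `0`. -/
noncomputable def cls (P : MvPolynomial (Fin n) K) : ℕ :=
  P.vars.sup fun i => (i : ℕ) + 1

/-- The degree of `G` in the leading variable of `P` (`0` if `P` is constant). -/
noncomputable def degLv (G P : MvPolynomial (Fin n) K) : ℕ :=
  if h : P.vars.Nonempty then G.degreeOf (P.vars.max' h) else 0

/-- `G` is R-reduced with respect to `P`, i.e. `deg(G, lv(P)) < deg(P, lv(P))`. -/
def RReduced (G P : MvPolynomial (Fin n) K) : Prop :=
  degLv G P < degLv P P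

/-- The initial of `P`: its leading coefficient w.r.t. its leading variable. -/
noncomputable def ini (P : MvPolynomial (Fin n) K) : MvPolynomial (Fin n) K :=
  if h : P.vars.Nonempty then lcv (P.vars.max' h) P else P

/-- Pseudo-remainder of `G` w.r.t. `F` in the leading variable of `F`
(in case `F` is constant, `m = 0` and the pseudo-remainder is `0`). -/
noncomputable def premLv (G F : MvPolynomial (Fin n) K) : MvPolynomial (Fin n) K :=
  if h : F.vars.Nonempty then prem G F (F.vars.max' h) else 0

/-- Pseudo-quotient of `G` w.r.t. `F` in the leading variable of `F`. -/
noncomputable def pquoLv (G F : MvPolynomial (Fin n) K) : MvPolynomial (Fin n) K :=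
  if h : F.vars.Nonempty then pquo G F (F.vars.max' h) else 0

/-- Iterated pseudo-remainder with respect to a triangular set `[T_1, …, T_r]`:
`prem(P, T) = prem(⋯prem(P, T_r, lv(T_r)), …, T_1, lv(T_1))`. -/
noncomputable def premTS (P : MvPolynomial (Fin n) K) (L : List (MvPolynomial (Fin n) K)) :
    MvPolynomial (Fin n) K :=
  L.foldr (fun T acc => premLv acc T) P

/-- The Sylvester matrix of `F` and `G` with respect to the variable `x_i`. -/
noncomputable def sylvester (i : Fin n) (F G : MvPolynomial (Fin n) K) :
    Matrix (Fin (G.degreeOf i + F.degreeOf i)) (Fin (G.degreeOf i + F.degreeOf i))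
      (MvPolynomial (Fin n) K) :=
  Matrix.of fun r c =>
    if (r : ℕ) < G.degreeOf i then
      if (r : ℕ) ≤ (c : ℕ) ∧ (c : ℕ) ≤ (r : ℕ) + F.degreeOf i then
        coefv i (F.degreeOf i + (r : ℕ) - (c : ℕ)) F
      else 0
    else
      if (r : ℕ) - G.degreeOf i ≤ (c : ℕ) ∧ (c : ℕ) ≤ (r : ℕ) then
        coefv i (G.degreeOf i + ((r : ℕ) - G.degreeOf i) - (c : ℕ)) G
      else 0

/-- The resultant `res(F, G, x_i)` of `F` and `G` w.r.t. `x_i`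
(the determinant of the Sylvester matrix). -/
noncomputable def resv (F G : MvPolynomial (Fin n) K) (i : Fin n) : MvPolynomial (Fin n) K :=
  (sylvester i F G).det

/-- Resultant of `F` and `G` w.r.t. the leading variable of `G`. -/
noncomputable def resLv (F G : MvPolynomial (Fin n) K) : MvPolynomial (Fin n) K :=
  if h : G.vars.Nonempty then resv F G (G.vars.max' h) else F

/-- Iterated resultant with respect to a triangular set:
`res(F, T) = res(⋯res(F, T_r, lv(T_r)), …, T_1, lv(T_1))`. -/
noncomputable def resTS (F : MvPolynomial (Fin n) K) (L : List (MvPolynomial (Fin n) K)) :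
    MvPolynomial (Fin n) K :=
  L.foldr (fun T acc => resLv acc T) F

/-- A triangular set: a nonempty ordered set of nonconstant polynomials with
strictly increasing classes. -/
def TriangularSet (L : List (MvPolynomial (Fin n) K)) : Prop :=
  L ≠ [] ∧ (∀ T ∈ L, 0 < cls T) ∧ L.Chain' fun A B => cls A < cls B

/-- An ascending set: either a single nonzero constant, or a triangular set in which
every later element is R-reduced with respect to every earlier one. -/
def AscendingSet (L : List (MvPolynomial (Fin n) K)) : Prop :=
  (∃ a : K, a ≠ 0 ∧ L = [MvPolynomial.C a]) ∨
    (TriangularSet L ∧ L.Pairwise fun A B => RReduced B A)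

/-- `F` has lower rank than `G`. -/
def rkLT (F G : MvPolynomial (Fin n) K) : Prop :=
  cls F < cls G ∨ (cls F = cls G ∧ 0 < cls F ∧ degLv F F < degLv G G)

/-- `F` and `G` have the same rank: neither has lower rank than the other. -/
def rkEQ (F G : MvPolynomial (Fin n) K) : Prop :=
  ¬ rkLT F G ∧ ¬ rkLT G F

/-- `B` has lower rank than `A` (as ascending sets). -/
def ascLT (B A : List (MvPolynomial (Fin n) K)) : Prop :=
  (∃ j, j < min A.length B.length ∧
      (∀ i, i < j → rkEQ (A.getD i 0) (B.getD i 0)) ∧ rkLT (B.getD j 0) (A.getD j 0)) ∨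
    (A.length < B.length ∧ ∀ i, i < A.length → rkEQ (A.getD i 0) (B.getD i 0))

/-- A Ritt characteristic set of the ideal `I`: an ascending set contained in `I`
of minimal rank among all ascending sets contained in `I`. -/
def RittCharSet (I : Ideal (MvPolynomial (Fin n) K)) (A : List (MvPolynomial (Fin n) K)) :
    Prop :=
  AscendingSet A ∧ (∀ a ∈ A, a ∈ I) ∧
    ∀ B : List (MvPolynomial (Fin n) K), AscendingSet B → (∀ b ∈ B, b ∈ I) → ¬ ascLT B A

/-- The saturated ideal of a triangular set, as a set of polynomials. -/
def satTS (L : List (MvPolynomial (Fin n) K)) : Set (MvPolynomial (Fin n) K) :=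
  {F | ∃ q : ℕ, 0 < q ∧ (L.map ini).prod ^ q * F ∈ Ideal.span {T | T ∈ L}}

/-- A regular set: a triangular set such that `res(ini(T_j), [T_1, …, T_{j-1}]) ≠ 0`
for `j = 2, …, r`. -/
def RegularSet (L : List (MvPolynomial (Fin n) K)) : Prop :=
  TriangularSet L ∧
    ∀ j : ℕ, 0 < j → j < L.length → resTS (ini (L.getD j 0)) (L.take j) ≠ 0

/-- A normal triangular set: `deg(ini(T_j), lv(T_i)) = 0` for all `i < j`. -/
def NormalSet (L : List (MvPolynomial (Fin n) K)) : Prop :=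
  TriangularSet L ∧ L.Pairwise fun A B => degLv (ini B) A = 0

/-- The purely lexicographical order on monomials determined by `x_1 < ⋯ < x_n`. -/
def plexLT (a b : Fin n →₀ ℕ) : Prop :=
  ∃ k : Fin n, a k < b k ∧ ∀ j : Fin n, k < j → a j = b j

/-- `m` is the leading monomial of `P` w.r.t. the plex order. -/
def IsLpp (P : MvPolynomial (Fin n) K) (m : Fin n →₀ ℕ) : Prop :=
  m ∈ P.support ∧ ∀ m' ∈ P.support, m' ≠ m → plexLT m' m

/-- `G` is the reduced (Buchberger–)Gröbner basis of the ideal `I` w.r.t. the plex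
term order determined by `x_1 < ⋯ < x_n`: its elements are nonzero monic members of `I`,
the leading monomial of every nonzero member of `I` is divisible by the leading monomial
of some element of `G`, every element of `G` is B-reduced w.r.t. the others, and `G`
generates `I`. -/
def IsReducedGB (I : Ideal (MvPolynomial (Fin n) K)) (G : Finset (MvPolynomial (Fin n) K)) :
    Prop :=
  (∀ g ∈ G, g ∈ I ∧ g ≠ 0 ∧ ∀ m, IsLpp g m → g.coeff m = 1) ∧
    (∀ F ∈ I, F ≠ 0 → ∃ g ∈ G, ∃ mg mF, IsLpp g mg ∧ IsLpp F mF ∧ mg ≤ mF) ∧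
    (∀ g ∈ G, ∀ g' ∈ G, g' ≠ g → ∀ m ∈ g.support, ∀ m', IsLpp g' m' → ¬ m' ≤ m) ∧
    Ideal.span (G : Set (MvPolynomial (Fin n) K)) = I

/-- `Cs` is the W-characteristic set of `I`: the minimal triangular set contained in the
reduced plex Gröbner basis `G` of `I`, i.e. for each class realized in `G`, `Cs` contains
the element of that class whose leading monomial is minimal w.r.t. the plex order, the
elements being ordered by increasing class (equivalently, by the plex order). -/
def IsWCharSet (I : Ideal (MvPolynomial (Fin n) K)) (Cs : List (MvPolynomial (Fin n) K)) :
    Prop :=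
  ∃ G : Finset (MvPolynomial (Fin n) K), IsReducedGB I G ∧
    (Cs.Chain' fun A B => cls A < cls B) ∧
    (∀ c ∈ Cs, c ∈ G) ∧
    (∀ g ∈ G, ∃ c ∈ Cs, cls c = cls g) ∧
    ∀ c ∈ Cs, ∀ g ∈ G, cls g = cls c → g ≠ c →
      ∃ mc mg, IsLpp c mc ∧ IsLpp g mg ∧ plexLT mc mg

/-- The set of common zeros of a set `S` of polynomials over `k`, taken in `Kc ^ n`
for an extension `Kc` of `k`. -/
def zeroSet {k : Type*} [Field k] (Kc : Type*) [CommRing Kc] [Algebra k Kc]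
    (S : Set (MvPolynomial (Fin n) k)) : Set (Fin n → Kc) :=
  {a | ∀ p ∈ S, MvPolynomial.aeval a p = 0}


lemma coeff_coefv_of_ne (i : Fin n) (d : ℕ) (F : MvPolynomial (Fin n) K)
    {μ : Fin n →₀ ℕ} (hμ : μ i ≠ 0) : (coefv i d F).coeff μ = 0 := by
  classical
  rw [coefv, MvPolynomial.coeff_sum]
  refine Finset.sum_eq_zero fun m hm => ?_
  rw [MvPolynomial.coeff_monomial]
  have : Finsupp.erase i m ≠ μ := by
    intro h
    apply hμ; rw [← h]; simp [Finsupp.erase_same]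
  rw [if_neg this]

lemma coeff_coefv (i : Fin n) (d : ℕ) (F : MvPolynomial (Fin n) K)
    {μ : Fin n →₀ ℕ} (hμ : μ i = 0) :
    (coefv i d F).coeff μ = F.coeff (μ + Finsupp.single i d) := by
  classical
  rw [coefv, MvPolynomial.coeff_sum]
  by_cases hmem : (μ + Finsupp.single i d) ∈ F.support.filter (fun m => m i = d)
  · rw [Finset.sum_eq_single_of_mem _ hmem]
    · rw [MvPolynomial.coeff_monomial, if_pos]
      ext j
      by_cases hj : j = i
      · subst hj; simp [Finsupp.erase_same, hμ]
      · simp [Finsupp.erase_ne hj, Finsupp.single_apply, hj, Ne.symm hj]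
    · intro m hm hne
      rw [MvPolynomial.coeff_monomial, if_neg]
      intro h
      apply hne
      have hmi : m i = d := by simpa using (Finset.mem_filter.mp hm).2
      ext j
      by_cases hj : j = i
      · subst hj; simp [hmi, hμ, Finsupp.single_apply]
      · have := congrFun (congrArg (fun f => f.toFun) h) j
        have h2 : m j = μ j := by
          have := Finsupp.ext_iff.mp h j; simpa [Finsupp.erase_ne hj] using this
        simp [h2, Finsupp.single_apply, hj, Ne.symm hj]
  · have hco : F.coeff (μ + Finsupp.single i d) = 0 := by
      by_contra hc
      apply hmem
      rw [Finset.mem_filter]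
      constructor
      · exact MvPolynomial.mem_support_iff.mpr hc
      · simp [hμ, Finsupp.single_apply]
    rw [hco]
    refine Finset.sum_eq_zero fun m hm => ?_
    rw [MvPolynomial.coeff_monomial, if_neg]
    intro h
    have hmi : m i = d := by simpa using (Finset.mem_filter.mp hm).2
    have hmm : m = μ + Finsupp.single i d := by
      ext j
      by_cases hj : j = i
      · subst hj; simp [hmi, hμ, Finsupp.single_apply]
      · have h2 : m j = μ j := by
          have := Finsupp.ext_iff.mp h j; simpa [Finsupp.erase_ne hj] using this
        simp [h2, Finsupp.single_apply, hj, Ne.symm hj]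
    rw [hmm] at hm
    exact hmem hm

lemma coefv_add (i : Fin n) (d : ℕ) (F G : MvPolynomial (Fin n) K) :
    coefv i d (F + G) = coefv i d F + coefv i d G := by
  classical
  apply MvPolynomial.ext
  intro μ
  by_cases hμ : μ i = 0
  · simp [coeff_coefv _ _ _ hμ, MvPolynomial.coeff_add]
  · simp [coeff_coefv_of_ne _ _ _ hμ, MvPolynomial.coeff_add]

lemma coefv_zero (i : Fin n) (d : ℕ) : coefv i d (0 : MvPolynomial (Fin n) K) = 0 := by
  simp [coefv]

noncomputable def coefvHom (i : Fin n) (d : ℕ) :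
    MvPolynomial (Fin n) K →+ MvPolynomial (Fin n) K :=
  AddMonoidHom.mk' (coefv i d) (coefv_add i d)

lemma coefv_sub (i : Fin n) (d : ℕ) (F G : MvPolynomial (Fin n) K) :
    coefv i d (F - G) = coefv i d F - coefv i d G :=
  map_sub (coefvHom i d) F G

lemma coefv_eq_zero_of_lt {i : Fin n} {d : ℕ} {F : MvPolynomial (Fin n) K}
    (h : F.degreeOf i < d) : coefv i d F = 0 := by
  classical
  apply MvPolynomial.ext
  intro μ
  by_cases hμ : μ i = 0
  · rw [coeff_coefv _ _ _ hμ, MvPolynomial.coeff_zero]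
    by_contra hc
    have hs : (μ + Finsupp.single i d) ∈ F.support := MvPolynomial.mem_support_iff.mpr hc
    have : (μ + Finsupp.single i d) i ≤ F.degreeOf i := by
      rw [MvPolynomial.degreeOf_eq_sup]
      exact Finset.le_sup (f := fun m => m i) hs
    simp [hμ] at this
    omega
  · simp [coeff_coefv_of_ne _ _ _ hμ]

lemma degreeOf_coefv_self (i : Fin n) (d : ℕ) (F : MvPolynomial (Fin n) K) :
    (coefv i d F).degreeOf i = 0 := by
  classical
  rw [MvPolynomial.degreeOf_eq_sup]
  refine Nat.le_antisymm (Finset.sup_le fun μ hμ => ?_) (Nat.zero_le _)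
  by_contra hc
  exact (MvPolynomial.mem_support_iff.mp hμ)
    (coeff_coefv_of_ne i d F (by omega))

lemma degreeOf_coefv_le (i : Fin n) (d : ℕ) (F : MvPolynomial (Fin n) K) (j : Fin n) :
    (coefv i d F).degreeOf j ≤ F.degreeOf j := by
  classical
  rw [MvPolynomial.degreeOf_eq_sup, MvPolynomial.degreeOf_eq_sup]
  refine Finset.sup_le fun μ hμ => ?_
  have hco := MvPolynomial.mem_support_iff.mp hμ
  by_cases hi : μ i = 0
  · have : F.coeff (μ + Finsupp.single i d) ≠ 0 := by
      rw [← coeff_coefv _ _ _ hi]; exact hco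
    have hs := MvPolynomial.mem_support_iff.mpr this
    calc μ j ≤ (μ + Finsupp.single i d) j := by simp
      _ ≤ _ := Finset.le_sup (f := fun m => m j) hs
  · exact absurd (coeff_coefv_of_ne i d F hi) hco

lemma coefv_degreeOf_ne_zero {i : Fin n} {F : MvPolynomial (Fin n) K} (h : F ≠ 0) :
    coefv i (F.degreeOf i) F ≠ 0 := by
  classical
  obtain ⟨m, hm, hmax⟩ := Finset.exists_mem_eq_sup F.support
    (MvPolynomial.support_nonempty.mpr h) (fun m => m i)
  have hmi : m i = F.degreeOf i := by rw [MvPolynomial.degreeOf_eq_sup, hmax]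
  intro hc
  have h1 : (coefv i (F.degreeOf i) F).coeff (Finsupp.erase i m) = 0 := by rw [hc]; simp
  rw [coeff_coefv _ _ _ (by simp [Finsupp.erase_same])] at h1
  have : Finsupp.erase i m + Finsupp.single i (F.degreeOf i) = m := by
    ext j
    by_cases hj : j = i
    · subst hj; simp [Finsupp.erase_same, hmi]
    · simp [Finsupp.erase_ne hj, Finsupp.single_apply, Ne.symm hj, hj]
  rw [this] at h1
  exact MvPolynomial.mem_support_iff.mp hm h1

lemma mem_vars_coefv {i : Fin n} {d : ℕ} {F : MvPolynomial (Fin n) K} {v : Fin n}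
    (h : v ∈ (coefv i d F).vars) : v ∈ F.vars ∧ v ≠ i := by
  classical
  obtain ⟨μ, hμ, hv⟩ := (MvPolynomial.mem_vars v).mp h
  have hco := MvPolynomial.mem_support_iff.mp hμ
  by_cases hi : μ i = 0
  · have hvi : v ≠ i := by
      intro he; subst he
      exact (Finsupp.mem_support_iff.mp hv) hi
    have : F.coeff (μ + Finsupp.single i d) ≠ 0 := by
      rw [← coeff_coefv _ _ _ hi]; exact hco
    refine ⟨(MvPolynomial.mem_vars v).mpr ⟨_, MvPolynomial.mem_support_iff.mpr this, ?_⟩, hvi⟩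
    rw [Finsupp.mem_support_iff] at hv ⊢
    simp [Finsupp.single_apply, Ne.symm hvi, hvi]
    intro hc
    omega
  · exact absurd (coeff_coefv_of_ne i d F hi) hco

lemma coefv_monomial_mul {i : Fin n} {m : Fin n →₀ ℕ} (hm : m i = 0) (c : K) (d : ℕ)
    (B : MvPolynomial (Fin n) K) :
    coefv i d (monomial m c * B) = monomial m c * coefv i d B := by
  classical
  apply MvPolynomial.ext
  intro μ
  by_cases hμ : μ i = 0
  · rw [coeff_coefv _ _ _ hμ, MvPolynomial.coeff_monomial_mul', MvPolynomial.coeff_monomial_mul']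
    have hle : m ≤ μ ↔ m ≤ μ + Finsupp.single i d := by
      constructor
      · intro h; exact le_trans h le_self_add
      · intro h j
        by_cases hj : j = i
        · subst hj; simp [hm]
        · have := h j; simpa [Finsupp.single_apply, hj, Ne.symm hj] using this
    by_cases h : m ≤ μ
    · have e0 : (μ - m) i = 0 := by
        rw [Finsupp.tsub_apply]; omega
      have e1 : μ + Finsupp.single i d - m = μ - m + Finsupp.single i d := by
        ext j
        by_cases hj : j = i
        · subst hj; rw [Finsupp.tsub_apply]; simp [hm, hμ]
        · rw [Finsupp.tsub_apply]; simp [Finsupp.single_apply, hj, Ne.symm hj, Finsupp.tsub_apply]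
      rw [if_pos (hle.mp h), if_pos h, coeff_coefv _ _ _ e0, e1]
    · rw [if_neg (fun hc => h (hle.mpr hc)), if_neg h]
  · rw [coeff_coefv_of_ne _ _ _ hμ, MvPolynomial.coeff_monomial_mul']
    by_cases h : m ≤ μ
    · rw [if_pos h, coeff_coefv_of_ne _ _ _ (by have := hm ▸ Finsupp.tsub_apply μ m i; omega), mul_zero]
    · rw [if_neg h]

lemma coefv_mul_left {i : Fin n} {A : MvPolynomial (Fin n) K} (hA : A.degreeOf i = 0)
    (d : ℕ) (B : MvPolynomial (Fin n) K) :
    coefv i d (A * B) = A * coefv i d B := by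
  classical
  have hsupp : ∀ m ∈ A.support, m i = 0 := by
    intro m hm
    have : m i ≤ A.degreeOf i := by
      rw [MvPolynomial.degreeOf_eq_sup]; exact Finset.le_sup (f := fun m => m i) hm
    omega
  conv_lhs => rw [A.as_sum]
  conv_rhs => rw [A.as_sum]
  rw [Finset.sum_mul, Finset.sum_mul,
    show coefv i d (∑ m ∈ A.support, monomial m (A.coeff m) * B)
      = ∑ m ∈ A.support, coefv i d (monomial m (A.coeff m) * B) from
        map_sum (coefvHom i d) _ _]
  refine Finset.sum_congr rfl fun m hm => ?_
  exact coefv_monomial_mul (hsupp m hm) _ _ B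

lemma coefv_X_pow_mul {i : Fin n} {δ e : ℕ} (h : δ ≤ e) (B : MvPolynomial (Fin n) K) :
    coefv i e (X i ^ δ * B) = coefv i (e - δ) B := by
  classical
  apply MvPolynomial.ext
  intro μ
  rw [MvPolynomial.X_pow_eq_monomial]
  by_cases hμ : μ i = 0
  · rw [coeff_coefv _ _ _ hμ, coeff_coefv _ _ _ hμ, MvPolynomial.coeff_monomial_mul', if_pos, one_mul]
    · congr 1
      ext j
      by_cases hj : j = i
      · subst hj; simp [hμ, Finsupp.single_apply]; try omega
      · simp [Finsupp.single_apply, hj, Ne.symm hj]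
    · intro j
      by_cases hj : j = i
      · subst hj; simp [Finsupp.single_apply, hμ, h]
      · simp [Finsupp.single_apply, hj, Ne.symm hj]
  · rw [coeff_coefv_of_ne _ _ _ hμ, coeff_coefv_of_ne _ _ _ hμ]

lemma coefv_of_degreeOf_eq_zero {i : Fin n} {A : MvPolynomial (Fin n) K}
    (hA : A.degreeOf i = 0) : coefv i 0 A = A := by
  classical
  apply MvPolynomial.ext
  intro μ
  by_cases hμ : μ i = 0
  · rw [coeff_coefv _ _ _ hμ]; simp
  · rw [coeff_coefv_of_ne _ _ _ hμ]
    symm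
    by_contra hc
    have : μ i ≤ A.degreeOf i := by
      rw [MvPolynomial.degreeOf_eq_sup]
      exact Finset.le_sup (f := fun m => m i) (MvPolynomial.mem_support_iff.mpr hc)
    omega

lemma coefv_pos_of_degreeOf_eq_zero {i : Fin n} {A : MvPolynomial (Fin n) K} {d : ℕ}
    (hA : A.degreeOf i = 0) (hd : 0 < d) : coefv i d A = 0 :=
  coefv_eq_zero_of_lt (by omega)

lemma degreeOf_lt_of_coefv_top {i : Fin n} {E : MvPolynomial (Fin n) K} {m : ℕ}
    (hm : 0 < m) (h : ∀ e, m ≤ e → coefv i e E = 0) : E.degreeOf i < m := by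
  by_cases hE : E = 0
  · subst hE; simpa [MvPolynomial.degreeOf_zero] using hm
  · by_contra hc
    exact coefv_degreeOf_ne_zero hE (h _ (by omega))

lemma degreeOf_neg' (j : Fin n) (a : MvPolynomial (Fin n) K) :
    (-a).degreeOf j = a.degreeOf j := by
  rw [MvPolynomial.degreeOf_eq_sup, MvPolynomial.degreeOf_eq_sup, MvPolynomial.support_neg]

lemma degreeOf_sub_le (j : Fin n) (a b : MvPolynomial (Fin n) K) :
    (a - b).degreeOf j ≤ max (a.degreeOf j) (b.degreeOf j) := by
  rw [sub_eq_add_neg]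
  refine le_trans (MvPolynomial.degreeOf_add_le _ _ _) ?_
  rw [degreeOf_neg' j b]

lemma degreeOf_pow_zero {j : Fin n} {p : MvPolynomial (Fin n) K} (h : p.degreeOf j = 0)
    (e : ℕ) : (p ^ e).degreeOf j = 0 := by
  induction e with
  | zero => simpa using MvPolynomial.degreeOf_C (1 : K) j
  | succ e ih =>
    rw [pow_succ]
    have := MvPolynomial.degreeOf_mul_le j (p ^ e) p
    omega

lemma degreeOf_X_pow_ne {i j : Fin n} (h : j ≠ i) (δ : ℕ) :
    ((X i : MvPolynomial (Fin n) K) ^ δ).degreeOf j = 0 := by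
  classical
  rw [MvPolynomial.X_pow_eq_monomial, MvPolynomial.degreeOf_eq_sup]
  refine Nat.le_antisymm (Finset.sup_le fun m hm => ?_) (Nat.zero_le _)
  rw [MvPolynomial.support_monomial] at hm
  simp only [one_ne_zero, if_neg, if_false] at hm
  simp only [Finset.mem_singleton] at hm
  subst hm
  simp [Finsupp.single_apply, h, Ne.symm h]

lemma degreeOf_lcv_self (i : Fin n) (F : MvPolynomial (Fin n) K) :
    (lcv i F).degreeOf i = 0 := degreeOf_coefv_self _ _ _

lemma pdivAux_spec (i : Fin n) (F : MvPolynomial (Fin n) K) :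
    ∀ (f : ℕ) (QR : MvPolynomial (Fin n) K × MvPolynomial (Fin n) K),
      ∃ Q', (pdivAux i F f QR).2 = lcv i F ^ f * QR.2 - Q' * F := by
  intro f
  induction f with
  | zero => intro QR; exact ⟨0, by simp [pdivAux]⟩
  | succ q ih =>
    intro QR
    rw [pdivAux]
    by_cases h : (QR.2).degreeOf i < F.degreeOf i
    · exact ⟨0, by simp [h]⟩
    · rw [if_neg h]
      obtain ⟨Q', hQ'⟩ := ih _
      refine ⟨Q' + lcv i F ^ q *
        (coefv i ((QR.2).degreeOf i) QR.2 * X i ^ ((QR.2).degreeOf i - F.degreeOf i)), ?_⟩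
      rw [hQ']
      ring

lemma prem_spec (G F : MvPolynomial (Fin n) K) (i : Fin n) :
    ∃ e Q', prem G F i = lcv i F ^ e * G - Q' * F := by
  obtain ⟨Q', h⟩ := pdivAux_spec i F (G.degreeOf i + 1 - F.degreeOf i) (0, G)
  exact ⟨_, Q', h⟩

lemma prem_of_degreeOf_lt {G F : MvPolynomial (Fin n) K} {i : Fin n}
    (h : G.degreeOf i < F.degreeOf i) : prem G F i = G := by
  have : G.degreeOf i + 1 - F.degreeOf i = 0 := by omega
  rw [prem, this, pdivAux]

lemma degreeOf_pdivAux_le {i j : Fin n} (hj : j ≠ i) {F : MvPolynomial (Fin n) K}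
    (hF : F.degreeOf j = 0) :
    ∀ (f : ℕ) (QR : MvPolynomial (Fin n) K × MvPolynomial (Fin n) K),
      ((pdivAux i F f QR).2).degreeOf j ≤ (QR.2).degreeOf j := by
  have hlcv : (lcv i F).degreeOf j ≤ 0 := hF ▸ degreeOf_coefv_le i _ F j
  intro f
  induction f with
  | zero => intro QR; simp [pdivAux]
  | succ q ih =>
    intro QR
    rw [pdivAux]
    by_cases h : (QR.2).degreeOf i < F.degreeOf i
    · rw [if_pos h]
      have h1 := MvPolynomial.degreeOf_mul_le j (lcv i F ^ (q+1)) QR.2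
      have h2 := degreeOf_pow_zero (Nat.le_zero.mp hlcv) (q+1)
      simpa [h2] using h1
    · rw [if_neg h]
      refine le_trans (le_trans (ih _) (le_of_eq (by dsimp only))) ?_
      set c := coefv i ((QR.2).degreeOf i) QR.2 with hc
      have h1 := degreeOf_sub_le j (lcv i F * QR.2)
        (c * X i ^ ((QR.2).degreeOf i - F.degreeOf i) * F)
      have h2 := MvPolynomial.degreeOf_mul_le j (lcv i F) QR.2
      have h3 := MvPolynomial.degreeOf_mul_le j
        (c * X i ^ ((QR.2).degreeOf i - F.degreeOf i)) F
      have h4 := MvPolynomial.degreeOf_mul_le j c (X i ^ ((QR.2).degreeOf i - F.degreeOf i))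
      have h5 := degreeOf_X_pow_ne hj ((QR.2).degreeOf i - F.degreeOf i) (K := K)
      have h6 := degreeOf_coefv_le i ((QR.2).degreeOf i) QR.2 j
      rw [← hc] at h6
      simp only [Nat.le_zero.mp hlcv] at h1 h2
      omega

lemma degreeOf_step_lt {i : Fin n} {F R : MvPolynomial (Fin n) K}
    (hF : 1 ≤ F.degreeOf i) (hR : F.degreeOf i ≤ R.degreeOf i) :
    (lcv i F * R - coefv i (R.degreeOf i) R * X i ^ (R.degreeOf i - F.degreeOf i) * F).degreeOf i
      < R.degreeOf i := by
  set m := R.degreeOf i with hm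
  set δ := m - F.degreeOf i with hδ
  refine degreeOf_lt_of_coefv_top (by omega) fun e he => ?_
  have hlf : (lcv i F).degreeOf i = 0 := degreeOf_lcv_self i F
  have hcR : (coefv i m R).degreeOf i = 0 := degreeOf_coefv_self i m R
  rw [coefv_sub, coefv_mul_left hlf, mul_assoc, coefv_mul_left hcR, coefv_X_pow_mul (by omega)]
  by_cases hem : e = m
  · subst hem
    have : m - δ = F.degreeOf i := by omega
    rw [this]
    rw [lcv, mul_comm]
    exact sub_self _
  · have h1 : coefv i e R = 0 := coefv_eq_zero_of_lt (by omega)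
    have h2 : coefv i (e - δ) F = 0 := coefv_eq_zero_of_lt (by omega)
    rw [h1, h2, mul_zero, mul_zero, sub_zero]

lemma degreeOf_pdivAux_lt {i : Fin n} {F : MvPolynomial (Fin n) K}
    (hF : 1 ≤ F.degreeOf i) :
    ∀ (f : ℕ) (QR : MvPolynomial (Fin n) K × MvPolynomial (Fin n) K),
      (QR.2).degreeOf i < F.degreeOf i + f →
      ((pdivAux i F f QR).2).degreeOf i < F.degreeOf i := by
  intro f
  induction f with
  | zero => intro QR h; simpa [pdivAux] using h
  | succ q ih =>
    intro QR h
    rw [pdivAux]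
    by_cases hd : (QR.2).degreeOf i < F.degreeOf i
    · rw [if_pos hd]
      dsimp only
      have h1 := MvPolynomial.degreeOf_mul_le i (lcv i F ^ (q+1)) QR.2
      have h2 := degreeOf_pow_zero (degreeOf_lcv_self i F) (q+1)
      omega
    · rw [if_neg hd]
      refine ih _ ?_
      dsimp only
      have := degreeOf_step_lt hF (by omega : F.degreeOf i ≤ (QR.2).degreeOf i)
      omega

lemma degreeOf_prem_lt {i : Fin n} {F : MvPolynomial (Fin n) K} (hF : 1 ≤ F.degreeOf i)
    (G : MvPolynomial (Fin n) K) : (prem G F i).degreeOf i < F.degreeOf i := by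
  refine degreeOf_pdivAux_lt hF _ _ ?_
  simp only
  omega

lemma plexLT_irrefl (a : Fin n →₀ ℕ) : ¬ plexLT a a := by
  rintro ⟨k, hk, -⟩; omega

lemma plexLT_trans {a b c : Fin n →₀ ℕ} (h1 : plexLT a b) (h2 : plexLT b c) : plexLT a c := by
  obtain ⟨k1, hk1, hab⟩ := h1
  obtain ⟨k2, hk2, hbc⟩ := h2
  rcases lt_trichotomy k1 k2 with h | h | h
  · exact ⟨k2, by rw [hab k2 h]; exact hk2, fun j hj => by rw [hab j (lt_trans h hj), hbc j hj]⟩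
  · subst h; exact ⟨k1, lt_trans hk1 hk2, fun j hj => by rw [hab j hj, hbc j hj]⟩
  · exact ⟨k1, by rw [← hbc k1 h]; exact hk1, fun j hj => by rw [hab j hj, hbc j (lt_trans h hj)]⟩

lemma plexLT_asymm {a b : Fin n →₀ ℕ} (h1 : plexLT a b) (h2 : plexLT b a) : False :=
  plexLT_irrefl a (plexLT_trans h1 h2)

lemma plexLT_total {a b : Fin n →₀ ℕ} (h : a ≠ b) : plexLT a b ∨ plexLT b a := by
  classical
  set s := (a.support ∪ b.support).filter (fun j => a j ≠ b j) with hs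
  have hsne : s.Nonempty := by
    obtain ⟨j, hj⟩ : ∃ j, a j ≠ b j := by
      by_contra hc
      push_neg at hc
      exact h (Finsupp.ext hc)
    refine ⟨j, Finset.mem_filter.mpr ⟨?_, hj⟩⟩
    rw [Finset.mem_union, Finsupp.mem_support_iff, Finsupp.mem_support_iff]
    by_contra hc
    push_neg at hc
    rw [hc.1, hc.2] at hj
    exact hj rfl
  set k := s.max' hsne with hk
  have hkmem := s.max'_mem hsne
  have hkne : a k ≠ b k := (Finset.mem_filter.mp hkmem).2
  have habove : ∀ j, k < j → a j = b j := by
    intro j hj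
    by_contra hc
    have hjs : j ∈ s := by
      refine Finset.mem_filter.mpr ⟨?_, hc⟩
      rw [Finset.mem_union, Finsupp.mem_support_iff, Finsupp.mem_support_iff]
      by_contra hc2
      push_neg at hc2
      rw [hc2.1, hc2.2] at hc
      exact hc rfl
    exact absurd (Finset.le_max' s j hjs) (not_le.mpr hj)
  rcases lt_or_gt_of_ne hkne with h' | h'
  · exact Or.inl ⟨k, h', habove⟩
  · exact Or.inr ⟨k, h', fun j hj => (habove j hj).symm⟩

lemma plexLE_of_le {a b : Fin n →₀ ℕ} (h : a ≤ b) : a = b ∨ plexLT a b := by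
  by_cases he : a = b
  · exact Or.inl he
  · rcases plexLT_total he with h' | h'
    · exact Or.inr h'
    · obtain ⟨k, hk, -⟩ := h'
      exact absurd (h k) (not_le.mpr hk)

lemma plexLT_add_right {a b : Fin n →₀ ℕ} (c : Fin n →₀ ℕ) (h : plexLT a b) :
    plexLT (a + c) (b + c) := by
  obtain ⟨k, hk, hab⟩ := h
  exact ⟨k, by simpa using hk, fun j hj => by simp [hab j hj]⟩

lemma plexLT_coord_le {a b : Fin n →₀ ℕ} {v : Fin n} (h : plexLT a b)
    (ha : ∀ w, v < w → a w = 0) (hb : ∀ w, v < w → b w = 0) : a v ≤ b v := by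
  obtain ⟨k, hk, hab⟩ := h
  rcases lt_trichotomy k v with h' | h' | h'
  · rw [hab v h']
  · subst h'; omega
  · rw [ha k h', hb k h'] at hk; omega

lemma exists_plex_max (s : Finset (Fin n →₀ ℕ)) (hs : s.Nonempty) :
    ∃ m ∈ s, ∀ m' ∈ s, m' ≠ m → plexLT m' m := by
  classical
  induction s using Finset.induction_on with
  | empty => exact absurd hs (by simp)
  | @insert a s ha ih =>
    by_cases hse : s.Nonempty
    · obtain ⟨m, hm, hmax⟩ := ih hse
      by_cases hne : a = m
      · subst hne
        exact ⟨a, Finset.mem_insert_self _ _, fun m' hm' hne' =>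
          hmax m' (by rcases Finset.mem_insert.mp hm' with h | h; exacts [absurd h hne', h]) hne'⟩
      · rcases plexLT_total hne with h | h
        · refine ⟨m, Finset.mem_insert_of_mem hm, fun m' hm' hne' => ?_⟩
          rcases Finset.mem_insert.mp hm' with h' | h'
          · subst h'; exact h
          · exact hmax m' h' hne'
        · refine ⟨a, Finset.mem_insert_self _ _, fun m' hm' hne' => ?_⟩
          rcases Finset.mem_insert.mp hm' with h' | h'
          · exact absurd h' hne'
          · by_cases h2 : m' = m
            · subst h2; exact h
            · exact plexLT_trans (hmax m' h' h2) h
    · rw [Finset.not_nonempty_iff_eq_empty.mp hse]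
      refine ⟨a, by simp, fun m' hm' hne' => ?_⟩
      simp only [Finset.mem_insert, Finset.notMem_empty, or_false] at hm'
      exact absurd hm' hne'

lemma exists_isLpp {P : MvPolynomial (Fin n) K} (h : P ≠ 0) : ∃ m, IsLpp P m := by
  obtain ⟨m, hm, hmax⟩ := exists_plex_max P.support (MvPolynomial.support_nonempty.mpr h)
  exact ⟨m, hm, hmax⟩

lemma isLpp_unique {P : MvPolynomial (Fin n) K} {m1 m2 : Fin n →₀ ℕ}
    (h1 : IsLpp P m1) (h2 : IsLpp P m2) : m1 = m2 := by
  by_contra hne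
  exact plexLT_asymm (h2.2 m1 h1.1 hne) (h1.2 m2 h2.1 (Ne.symm hne))

lemma supp_coord_le_degreeOf {P : MvPolynomial (Fin n) K} {m : Fin n →₀ ℕ}
    (hm : m ∈ P.support) (v : Fin n) : m v ≤ P.degreeOf v := by
  rw [MvPolynomial.degreeOf_eq_sup]
  exact Finset.le_sup (f := fun m => m v) hm

lemma isLpp_coord_eq_degreeOf {P : MvPolynomial (Fin n) K} {m : Fin n →₀ ℕ} {v : Fin n}
    (h : IsLpp P m) (hv : ∀ m' ∈ P.support, ∀ w, v < w → m' w = 0) :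
    m v = P.degreeOf v := by
  refine le_antisymm (supp_coord_le_degreeOf h.1 v) ?_
  by_cases hP : P = 0
  · subst hP; simp at *
  obtain ⟨m'', hm'', hmax⟩ := Finset.exists_mem_eq_sup P.support
    (MvPolynomial.support_nonempty.mpr hP) (fun m => m v)
  rw [MvPolynomial.degreeOf_eq_sup, hmax]
  by_cases hne : m'' = m
  · subst hne; exact le_refl _
  · have hlt := h.2 m'' hm'' hne
    exact plexLT_coord_le hlt (hv m'' hm'') (hv m h.1)

lemma supp_zero_of_not_mem_vars {P : MvPolynomial (Fin n) K} {m : Fin n →₀ ℕ}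
    (hm : m ∈ P.support) {w : Fin n} (hw : w ∉ P.vars) : m w = 0 := by
  by_contra hc
  exact hw ((MvPolynomial.mem_vars w).mpr ⟨m, hm, Finsupp.mem_support_iff.mpr hc⟩)

lemma cls_le_n (P : MvPolynomial (Fin n) K) : cls P ≤ n := by
  refine Finset.sup_le fun i _ => ?_
  omega

lemma vars_nonempty_of_cls_pos {P : MvPolynomial (Fin n) K} (h : 0 < cls P) :
    P.vars.Nonempty := by
  by_contra hc
  rw [Finset.not_nonempty_iff_eq_empty] at hc
  rw [cls, hc] at h
  simp at h

lemma cls_eq_max' {P : MvPolynomial (Fin n) K} (h : P.vars.Nonempty) :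
    cls P = (P.vars.max' h : ℕ) + 1 := by
  refine le_antisymm (Finset.sup_le fun i hi => ?_) ?_
  · have := Finset.le_max' P.vars i hi
    have : (i : ℕ) ≤ ((P.vars.max' h : Fin n) : ℕ) := this
    omega
  · exact Finset.le_sup (f := fun i : Fin n => (i : ℕ) + 1) (P.vars.max'_mem h)

lemma degreeOf_pos_of_mem_vars {P : MvPolynomial (Fin n) K} {v : Fin n}
    (h : v ∈ P.vars) : 1 ≤ P.degreeOf v := by
  obtain ⟨m, hm, hv⟩ := (MvPolynomial.mem_vars v).mp h
  have := supp_coord_le_degreeOf hm v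
  have := Finsupp.mem_support_iff.mp hv
  omega

lemma degreeOf_eq_zero_of_gt_max' {P : MvPolynomial (Fin n) K} (h : P.vars.Nonempty)
    {w : Fin n} (hw : P.vars.max' h < w) : P.degreeOf w = 0 := by
  rw [MvPolynomial.degreeOf_eq_sup]
  refine Nat.le_antisymm (Finset.sup_le fun m hm => ?_) (Nat.zero_le _)
  rw [supp_zero_of_not_mem_vars hm (fun hc => absurd (Finset.le_max' _ _ hc) (not_le.mpr hw))]

lemma ini_ne_zero {T : MvPolynomial (Fin n) K} (h : T.vars.Nonempty) : ini T ≠ 0 := by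
  rw [ini, dif_pos h]
  have hT : T ≠ 0 := by
    intro hc; subst hc; simp [MvPolynomial.vars_0] at h
  exact coefv_degreeOf_ne_zero hT

lemma degreeOf_ini_le {T : MvPolynomial (Fin n) K} (h : T.vars.Nonempty) (v : Fin n) :
    (ini T).degreeOf v ≤ T.degreeOf v := by
  rw [ini, dif_pos h]
  exact degreeOf_coefv_le _ _ _ _

lemma degreeOf_ini_top {T : MvPolynomial (Fin n) K} (h : T.vars.Nonempty) :
    (ini T).degreeOf (T.vars.max' h) = 0 := by
  rw [ini, dif_pos h]
  exact degreeOf_coefv_self _ _ _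

lemma premTS_rep {L : List (MvPolynomial (Fin n) K)} (hL : ∀ T ∈ L, T.vars.Nonempty)
    (P : MvPolynomial (Fin n) K) :
    ∃ J B : MvPolynomial (Fin n) K, premTS P L = J * P - B ∧
      B ∈ Ideal.span {T | T ∈ L} ∧ J ≠ 0 ∧
      (∀ v : Fin n, (∀ T, ∀ hT : T ∈ L, (ini T).degreeOf v = 0) → J.degreeOf v = 0) := by
  induction L with
  | nil =>
    exact ⟨1, 0, by simp [premTS], by simp, one_ne_zero, fun v _ => by
      simpa using MvPolynomial.degreeOf_C (1 : K) v⟩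
  | cons A L' ih =>
    obtain ⟨J', B', hrep, hmem, hJ', hdeg⟩ := ih (fun T hT => hL T (List.mem_cons_of_mem A hT))
    have hA : A.vars.Nonempty := hL A (List.mem_cons_self)
    have hstep : premTS P (A :: L') = premLv (premTS P L') A := rfl
    rw [hstep, premLv, dif_pos hA]
    obtain ⟨e, Q', hQ'⟩ := prem_spec (premTS P L') A (A.vars.max' hA)
    have hlcv : lcv (A.vars.max' hA) A = ini A := by rw [ini, dif_pos hA]
    refine ⟨ini A ^ e * J', ini A ^ e * B' + Q' * A, ?_, ?_, ?_, ?_⟩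
    · rw [hQ', hrep, hlcv]; ring
    · have h1 : B' ∈ Ideal.span {T | T ∈ A :: L'} := by
        refine Ideal.span_mono ?_ hmem
        intro x hx; exact List.mem_cons_of_mem A hx
      have h2 : A ∈ Ideal.span {T | T ∈ A :: L'} :=
        Ideal.subset_span (List.mem_cons_self)
      exact Ideal.add_mem _ (Ideal.mul_mem_left _ _ h1) (Ideal.mul_mem_left _ _ h2)
    · exact mul_ne_zero (pow_ne_zero _ (ini_ne_zero hA)) hJ'
    · intro v hv
      have h1 : (ini A).degreeOf v = 0 := hv A (List.mem_cons_self)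
      have h2 := degreeOf_pow_zero h1 e
      have h3 := hdeg v (fun T hT => hv T (List.mem_cons_of_mem A hT))
      have := MvPolynomial.degreeOf_mul_le v (ini A ^ e) J'
      omega

lemma premTS_degreeOf_le {L : List (MvPolynomial (Fin n) K)} (hL : ∀ T ∈ L, T.vars.Nonempty)
    (P : MvPolynomial (Fin n) K) {v : Fin n} (hv : ∀ T ∈ L, T.degreeOf v = 0) :
    (premTS P L).degreeOf v ≤ P.degreeOf v := by
  induction L with
  | nil => exact le_refl _
  | cons A L' ih =>
    have hA : A.vars.Nonempty := hL A (List.mem_cons_self)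
    have hstep : premTS P (A :: L') = premLv (premTS P L') A := rfl
    rw [hstep, premLv, dif_pos hA, prem]
    have hvA : A.degreeOf v = 0 := hv A (List.mem_cons_self)
    have hne : v ≠ A.vars.max' hA := by
      intro he
      have := degreeOf_pos_of_mem_vars (A.vars.max'_mem hA)
      rw [← he, hvA] at this
      omega
    refine le_trans (degreeOf_pdivAux_le hne hvA _ _) ?_
    exact ih (fun T hT => hL T (List.mem_cons_of_mem A hT))
      (fun T hT => hv T (List.mem_cons_of_mem A hT))

lemma premTS_degreeOf_lt {L : List (MvPolynomial (Fin n) K)} (hL : ∀ T ∈ L, T.vars.Nonempty)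
    (hpair : L.Pairwise fun A B => cls A < cls B)
    (P : MvPolynomial (Fin n) K) {T : MvPolynomial (Fin n) K} (hT : T ∈ L)
    (hTne : T.vars.Nonempty) :
    (premTS P L).degreeOf (T.vars.max' hTne) < T.degreeOf (T.vars.max' hTne) := by
  induction L with
  | nil => simp at hT
  | cons A L' ih =>
    have hA : A.vars.Nonempty := hL A (List.mem_cons_self)
    have hstep : premTS P (A :: L') = premLv (premTS P L') A := rfl
    rw [hstep, premLv, dif_pos hA]
    rcases List.mem_cons.mp hT with he | hmem
    · subst he
      have h1 : 1 ≤ T.degreeOf (T.vars.max' hTne) :=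
        degreeOf_pos_of_mem_vars (T.vars.max'_mem hTne)
      exact degreeOf_prem_lt h1 (premTS P L')
    · have hclsAT : cls A < cls T := (List.pairwise_cons.mp hpair).1 T hmem
      have hlt : A.vars.max' hA < T.vars.max' hTne := by
        rw [cls_eq_max' hA, cls_eq_max' hTne] at hclsAT
        have h2 : ((A.vars.max' hA : Fin n) : ℕ) < ((T.vars.max' hTne : Fin n) : ℕ) := by omega
        exact h2
      have hdegA : A.degreeOf (T.vars.max' hTne) = 0 := degreeOf_eq_zero_of_gt_max' hA hlt
      have hne : T.vars.max' hTne ≠ A.vars.max' hA := by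
        intro he; rw [he] at hlt; exact lt_irrefl _ hlt
      rw [prem]
      refine lt_of_le_of_lt (degreeOf_pdivAux_le hne hdegA _ _) ?_
      exact ih (fun T' hT' => hL T' (List.mem_cons_of_mem A hT'))
        (List.pairwise_cons.mp hpair).2 hmem

lemma premTS_noop {L : List (MvPolynomial (Fin n) K)} {P : MvPolynomial (Fin n) K}
    (h : ∀ T, ∀ hT : T ∈ L, ∃ hne : T.vars.Nonempty,
      P.degreeOf (T.vars.max' hne) < T.degreeOf (T.vars.max' hne)) :
    premTS P L = P := by
  induction L with
  | nil => rfl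
  | cons A L' ih =>
    have hstep : premTS P (A :: L') = premLv (premTS P L') A := rfl
    have hrec : premTS P L' = P := ih (fun T hT => h T (List.mem_cons_of_mem A hT))
    obtain ⟨hne, hdeg⟩ := h A (List.mem_cons_self)
    rw [hstep, hrec, premLv, dif_pos hne, prem_of_degreeOf_lt hdeg]

lemma premTS_append (P : MvPolynomial (Fin n) K) (L1 L2 : List (MvPolynomial (Fin n) K)) :
    premTS P (L1 ++ L2) = premTS (premTS P L2) L1 :=
  List.foldr_append

lemma coefv_mem_span {s : Set (MvPolynomial (Fin n) K)} {y : Fin n}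
    (hs : ∀ T ∈ s, T.degreeOf y = 0) {B : MvPolynomial (Fin n) K}
    (hB : B ∈ Ideal.span s) (d : ℕ) : coefv y d B ∈ Ideal.span s := by
  classical
  obtain ⟨c, hc, hsum⟩ := Submodule.mem_span_set.mp hB
  rw [← hsum]
  rw [Finsupp.sum]
  rw [show coefv y d (∑ a ∈ c.support, c a • a) = ∑ a ∈ c.support, coefv y d (c a • a) from
    map_sum (coefvHom y d) _ _]
  refine Ideal.sum_mem _ fun a ha => ?_
  have has : a ∈ s := hc ha
  have haz : a.degreeOf y = 0 := hs a has
  have : coefv y d (c a • a) = coefv y d (c a) * a := by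
    rw [smul_eq_mul, mul_comm, coefv_mul_left haz, mul_comm]
  rw [this]
  exact Ideal.mul_mem_left _ _ (Ideal.subset_span has)

lemma isLpp_mul_X_pow_add {A W : MvPolynomial (Fin n) K} {y : Fin n} {d : ℕ}
    {mA : Fin n →₀ ℕ} (hA : IsLpp A mA)
    (hAv : ∀ m ∈ A.support, ∀ w, y ≤ w → m w = 0)
    (hW : ∀ m ∈ W.support, m y < d ∧ ∀ w, y < w → m w = 0) :
    IsLpp (A * X y ^ d + W) (mA + Finsupp.single y d) := by
  classical
  have hmAy : ∀ w, y ≤ w → mA w = 0 := hAv mA hA.1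
  have hsupp : ∀ μ ∈ (A * X y ^ d).support, ∃ a ∈ A.support, μ = a + Finsupp.single y d := by
    intro μ hμ
    have hco := MvPolynomial.mem_support_iff.mp hμ
    rw [MvPolynomial.X_pow_eq_monomial, MvPolynomial.coeff_mul_monomial'] at hco
    by_cases h : Finsupp.single y d ≤ μ
    · rw [if_pos h, mul_one] at hco
      refine ⟨μ - Finsupp.single y d, MvPolynomial.mem_support_iff.mpr hco, ?_⟩
      ext j
      rw [Finsupp.add_apply, Finsupp.tsub_apply]
      have := h j
      omega
    · rw [if_neg h] at hco; exact absurd rfl hco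
  constructor
  · rw [MvPolynomial.mem_support_iff, MvPolynomial.coeff_add]
    have h1 : (A * X y ^ d).coeff (mA + Finsupp.single y d) = A.coeff mA := by
      rw [MvPolynomial.X_pow_eq_monomial, MvPolynomial.coeff_mul_monomial']
      rw [if_pos le_add_self, add_tsub_cancel_right, mul_one]
    have h2 : W.coeff (mA + Finsupp.single y d) = 0 := by
      by_contra hc
      have := (hW _ (MvPolynomial.mem_support_iff.mpr hc)).1
      rw [Finsupp.add_apply, Finsupp.single_eq_same] at this
      omega
    rw [h1, h2, add_zero]
    exact MvPolynomial.mem_support_iff.mp hA.1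
  · intro m' hm' hne
    have hm'' := Finset.mem_of_subset (MvPolynomial.support_add) hm'
    rcases Finset.mem_union.mp hm'' with h | h
    · obtain ⟨a, ha, hae⟩ := hsupp m' h
      subst hae
      have hane : a ≠ mA := by
        intro he; subst he; exact hne rfl
      exact plexLT_add_right _ (hA.2 a ha hane)
    · obtain ⟨h1, h2⟩ := hW m' h
      refine ⟨y, ?_, fun j hj => ?_⟩
      · rw [Finsupp.add_apply, Finsupp.single_eq_same]
        have := hmAy y (le_refl y)
        omega
      · rw [Finsupp.add_apply, h2 j hj, hmAy j (le_of_lt hj),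
          Finsupp.single_apply, if_neg (ne_of_lt hj)]
        simp

lemma tail_degreeOf_lt {P : MvPolynomial (Fin n) K} {y : Fin n}
    (h : 1 ≤ P.degreeOf y) :
    (P - coefv y (P.degreeOf y) P * X y ^ (P.degreeOf y)).degreeOf y < P.degreeOf y := by
  set d := P.degreeOf y with hd
  refine degreeOf_lt_of_coefv_top (by omega) fun e he => ?_
  have hfree : (coefv y d P).degreeOf y = 0 := degreeOf_coefv_self _ _ _
  rw [coefv_sub, mul_comm (coefv y d P), coefv_X_pow_mul (by omega : d ≤ e)]
  by_cases hed : e = d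
  · subst hed
    rw [Nat.sub_self, coefv_of_degreeOf_eq_zero hfree, sub_self]
  · rw [coefv_eq_zero_of_lt (by omega), coefv_pos_of_degreeOf_eq_zero hfree (by omega), sub_zero]

lemma supp_zero_above_max' {P : MvPolynomial (Fin n) K} (h : P.vars.Nonempty) :
    ∀ m ∈ P.support, ∀ w, P.vars.max' h < w → m w = 0 := by
  intro m hm w hw
  have := degreeOf_eq_zero_of_gt_max' h hw
  have := supp_coord_le_degreeOf hm w
  omega

lemma isLpp_top_coord {P : MvPolynomial (Fin n) K} (h : P.vars.Nonempty)
    {mP : Fin n →₀ ℕ} (hP : IsLpp P mP) :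
    mP (P.vars.max' h) = P.degreeOf (P.vars.max' h) :=
  isLpp_coord_eq_degreeOf hP (supp_zero_above_max' h)

set_option maxHeartbeats 2000000 in
/-- Theorem mainth1. Let `[C_1, …, C_r]` be the W-characteristic set of
`⟨P⟩` under the variable ordering in which the leading variables of the `C_i` are the `r`
greatest variables (`u_1 < ⋯ < u_m < y_1 < ⋯ < y_r` with `y_i = lv(C_i)`). For any
`1 ≤ k < r`, if `C_k = [C_1, …, C_k]` is normal and `I_{k+1} = ini(C_{k+1})`, with
`lv(I_{k+1}) = y_l`, is not R-reduced with respect to `C_l`, then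
`prem(I_{k+1}, C_k) = 0` and `prem(C_{k+1}, C_k) = 0`.
(Here `C_{k+1} = Cs.getD k 0` and `C_l = Cs.getD l 0` in 0-based indexing.) -/
theorem statement13 {n : ℕ} {K : Type*} [Field K]
    (P : Finset (MvPolynomial (Fin n) K)) (hne : P.Nonempty) (h0 : ∀ p ∈ P, p ≠ 0)
    (hproper : Ideal.span (P : Set (MvPolynomial (Fin n) K)) ≠ ⊤)
    (Cs : List (MvPolynomial (Fin n) K))
    (hW : IsWCharSet (Ideal.span (P : Set (MvPolynomial (Fin n) K))) Cs)
    (hord : ∀ i, i < Cs.length → cls (Cs.getD i 0) = n - Cs.length + i + 1)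
    (k : ℕ) (hk1 : 1 ≤ k) (hkr : k < Cs.length)
    (hnorm : NormalSet (Cs.take k))
    (l : ℕ) (hl : l < Cs.length)
    (hlv : cls (ini (Cs.getD k 0)) = cls (Cs.getD l 0))
    (hnred : ¬ RReduced (ini (Cs.getD k 0)) (Cs.getD l 0)) :
    premTS (ini (Cs.getD k 0)) (Cs.take k) = 0 ∧
      premTS (Cs.getD k 0) (Cs.take k) = 0 := by
  classical
  obtain ⟨G, ⟨hGB1, hGB2, hGB3, hGB4⟩, hchain, hCsG, hclsonto, hmin⟩ := hW
  set len := Cs.length with hlendef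
  set Idl := Ideal.span (↑P : Set (MvPolynomial (Fin n) K)) with hIdl
  -- basic index facts
  have hnl : len ≤ n := by
    have h1 := hord (len - 1) (by omega)
    have h2 := cls_le_n (Cs.getD (len - 1) 0)
    omega
  have hvne : ∀ i, i < len → (Cs.getD i 0).vars.Nonempty := fun i hi =>
    vars_nonempty_of_cls_pos (by rw [hord i hi]; omega)
  have htop : ∀ i, ∀ hi : i < len,
      (((Cs.getD i 0).vars.max' (hvne i hi) : Fin n) : ℕ) = n - len + i := by
    intro i hi
    have h1 := hord i hi
    rw [cls_eq_max' (hvne i hi)] at h1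
    omega
  have hd1 : ∀ i, ∀ hi : i < len,
      1 ≤ (Cs.getD i 0).degreeOf ((Cs.getD i 0).vars.max' (hvne i hi)) :=
    fun i hi => degreeOf_pos_of_mem_vars (Finset.max'_mem _ _)
  have hmemCs : ∀ i, i < len → Cs.getD i 0 ∈ G := fun i hi => hCsG _ (by
    rw [List.getD_eq_getElem Cs 0 hi]; exact List.getElem_mem hi)
  have hCI : ∀ i, i < len → Cs.getD i 0 ∈ Idl := fun i hi => (hGB1 _ (hmemCs i hi)).1
  have hpairCs : Cs.Pairwise fun A B => cls A < cls B := by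
    haveI : IsTrans (MvPolynomial (Fin n) K) (fun A B => cls A < cls B) :=
      ⟨fun a b c hab hbc => lt_trans hab hbc⟩
    replace hchain := List.isChain_iff_pairwise.mp hchain
    exact hchain
  -- index extraction for take-lists
  have hLidx : ∀ m, m ≤ len → ∀ T, T ∈ Cs.take m → ∃ j, ∃ hj : j < m, T = Cs.getD j 0 := by
    intro m hm T hT
    obtain ⟨i, hi, he⟩ := List.mem_iff_getElem.mp hT
    have hil : i < m := by
      simp only [List.length_take] at hi
      omega
    refine ⟨i, hil, ?_⟩
    rw [List.getD_eq_getElem Cs 0 (by omega), ← he, List.getElem_take]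
  have hLvne : ∀ m, m ≤ len → ∀ T, T ∈ Cs.take m → T.vars.Nonempty := by
    intro m hm T hT
    obtain ⟨j, hj, rfl⟩ := hLidx m hm T hT
    exact hvne j (by omega)
  have hLpair : ∀ m, (Cs.take m).Pairwise fun A B => cls A < cls B :=
    fun m => hpairCs.sublist (List.take_sublist m Cs)
  -- notation for the key objects
  have hvneP0 : (Cs.getD k 0).vars.Nonempty := hvne k hkr
  set y := (Cs.getD k 0).vars.max' hvneP0 with hydef
  set d := (Cs.getD k 0).degreeOf y with hddef
  have hd1k : 1 ≤ d := hd1 k hkr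
  set I0 := ini (Cs.getD k 0) with hI0def
  have hI0c : I0 = coefv y d (Cs.getD k 0) := by
    rw [hI0def, ini, dif_pos hvneP0, lcv]
  have hI0ne : I0 ≠ 0 := ini_ne_zero hvneP0
  have hvneI0 : I0.vars.Nonempty := vars_nonempty_of_cls_pos (by rw [hlv, hord l hl]; omega)
  set yl := (Cs.getD l 0).vars.max' (hvne l hl) with hyldef
  have hI0topval : ((I0.vars.max' hvneI0 : Fin n) : ℕ) = n - len + l := by
    have h1 := hlv
    rw [cls_eq_max' hvneI0, cls_eq_max' (hvne l hl)] at h1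
    have h2 := htop l hl
    omega
  have hI0top : I0.vars.max' hvneI0 = yl := by
    apply Fin.ext
    rw [hI0topval, htop l hl]
  have hlk : l < k := by
    have h3 : (I0.vars.max' hvneI0) ∈ I0.vars := Finset.max'_mem _ _
    have h3' : I0.vars.max' hvneI0 ∈ (coefv y d (Cs.getD k 0)).vars := by
      rw [← hI0c]; exact h3
    have h4 := mem_vars_coefv h3'
    have h5 : (I0.vars.max' hvneI0 : Fin n) ≤ y := Finset.le_max' _ _ h4.1
    have h6 := htop k hkr
    have h7 : ¬ ((I0.vars.max' hvneI0 : Fin n) = y) := h4.2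
    have h8 : ((I0.vars.max' hvneI0 : Fin n) : ℕ) ≤ (y : ℕ) := h5
    have h9 : ((I0.vars.max' hvneI0 : Fin n) : ℕ) ≠ (y : ℕ) := fun he => h7 (Fin.ext he)
    rw [hI0topval] at h8 h9
    omega
  have hylval : ((yl : Fin n) : ℕ) = n - len + l := htop l hl
  have hyval : ((y : Fin n) : ℕ) = n - len + k := htop k hkr
  have hyly : yl < y := by
    rw [Fin.lt_def, hylval, hyval]; omega
  have hnred' : (Cs.getD l 0).degreeOf yl ≤ I0.degreeOf yl := by
    simp only [RReduced, degLv, dif_pos (hvne l hl)] at hnred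
    rw [← hyldef] at hnred
    omega
  -- the KEY lemma: any nonzero element of the ideal is "hit" by some g in G
  have KEY : ∀ (F : MvPolynomial (Fin n) K) (mF : Fin n →₀ ℕ), F ∈ Idl → IsLpp F mF →
      ∃ j, ∃ hj : j < len, ∃ mg : Fin n →₀ ℕ,
        mg ≤ mF ∧
        (Cs.getD j 0).degreeOf ((Cs.getD j 0).vars.max' (hvne j hj)) ≤
          mg ((Cs.getD j 0).vars.max' (hvne j hj)) ∧
        (∀ w, (Cs.getD j 0).vars.max' (hvne j hj) < w → mg w = 0) ∧
        (∀ mc, IsLpp (Cs.getD j 0) mc → (mc = mg ∨ plexLT mc mg)) := by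
    intro F mF hFI hFlpp
    have hFne : F ≠ 0 := by
      intro h; subst h; simpa using hFlpp.1
    obtain ⟨g, hgG, mg, mF', hlppg, hlppF, hle⟩ := hGB2 F hFI hFne
    have hmFe : mF' = mF := isLpp_unique hlppF hFlpp
    subst hmFe
    obtain ⟨c, hcCs, hclsc⟩ := hclsonto g hgG
    obtain ⟨j, hj, hje⟩ := List.mem_iff_getElem.mp hcCs
    have hjlen : j < len := hj
    have hjd : Cs.getD j 0 = c := by rw [List.getD_eq_getElem Cs 0 hjlen, hje]
    have hgne : g ≠ 0 := (hGB1 g hgG).2.1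
    have hclsg : cls g = cls (Cs.getD j 0) := by rw [hjd, hclsc]
    have hvng : g.vars.Nonempty := vars_nonempty_of_cls_pos (by
      rw [hclsg, hord j hjlen]; omega)
    have htopg : g.vars.max' hvng = (Cs.getD j 0).vars.max' (hvne j hjlen) := by
      apply Fin.ext
      have e1 := cls_eq_max' hvng
      have e2 := cls_eq_max' (hvne j hjlen)
      rw [hclsg] at e1
      omega
    have hCjne : (Cs.getD j 0) ≠ 0 := (hGB1 _ (hmemCs j hjlen)).2.1
    have hzero : ∀ w, (Cs.getD j 0).vars.max' (hvne j hjlen) < w → mg w = 0 := by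
      intro w hw
      exact supp_zero_above_max' hvng mg hlppg.1 w (htopg ▸ hw)
    have hminclause : ∀ mc, IsLpp (Cs.getD j 0) mc → (mc = mg ∨ plexLT mc mg) := by
      intro mc hmc
      by_cases hgc : g = Cs.getD j 0
      · left; exact isLpp_unique hmc (hgc ▸ hlppg)
      · right
        obtain ⟨mc2, mg2, hmc2, hmg2, hplex⟩ := hmin (Cs.getD j 0)
          (by rw [List.getD_eq_getElem Cs 0 hjlen]; exact List.getElem_mem hjlen)
          g hgG hclsg hgc
        have he1 : mc = mc2 := isLpp_unique hmc hmc2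
        have he2 : mg = mg2 := isLpp_unique hlppg hmg2
        rw [he1, he2]
        exact hplex
    have hdegle : (Cs.getD j 0).degreeOf ((Cs.getD j 0).vars.max' (hvne j hjlen)) ≤
        mg ((Cs.getD j 0).vars.max' (hvne j hjlen)) := by
      obtain ⟨mc, hmc⟩ := exists_isLpp hCjne
      have hmcTop := isLpp_top_coord (hvne j hjlen) hmc
      rcases hminclause mc hmc with he | hlt
      · rw [← he, hmcTop]
      · have hcle := plexLT_coord_le hlt
          (fun w hw => supp_zero_above_max' (hvne j hjlen) mc hmc.1 w hw) hzero
        rw [hmcTop] at hcle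
        exact hcle
    exact ⟨j, hjlen, mg, hle, hdegle, hzero, hminclause⟩
  -- Part A: premTS I0 (Cs.take k) = 0
  have hL1vne : ∀ T ∈ Cs.take (l+1), T.vars.Nonempty := hLvne (l+1) (by omega)
  have hsplit : premTS I0 (Cs.take k) = premTS I0 (Cs.take (l+1)) := by
    have h1 : Cs.take k = Cs.take (l+1) ++ ((Cs.take k).drop (l+1)) := by
      conv_lhs => rw [← List.take_append_drop (l+1) (Cs.take k)]
      rw [List.take_take]
      congr 2
      omega
    rw [h1, premTS_append]
    congr 1
    apply premTS_noop
    intro T hT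
    obtain ⟨i, hi, he⟩ := List.mem_iff_getElem.mp hT
    have hik : i < k - (l+1) := by
      simp only [List.length_drop, List.length_take] at hi
      omega
    have hje : T = Cs.getD (l+1+i) 0 := by
      rw [List.getD_eq_getElem Cs 0 (by omega), ← he, List.getElem_drop, List.getElem_take]
    have hjlt : l+1+i < len := by omega
    rw [hje]
    refine ⟨hvne _ hjlt, ?_⟩
    have hdeg0 : I0.degreeOf ((Cs.getD (l+1+i) 0).vars.max' (hvne _ hjlt)) = 0 := by
      apply degreeOf_eq_zero_of_gt_max' hvneI0
      rw [Fin.lt_def, hI0topval, htop _ hjlt]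
      omega
    have := hd1 _ hjlt
    omega
  set R2 := premTS I0 (Cs.take (l+1)) with hR2def
  have hR2high : ∀ w : Fin n, yl < w → R2.degreeOf w = 0 := by
    intro w hw
    rw [hR2def]
    have h1 : ∀ T ∈ Cs.take (l+1), T.degreeOf w = 0 := by
      intro T hT
      obtain ⟨j, hj, rfl⟩ := hLidx (l+1) (by omega) T hT
      apply degreeOf_eq_zero_of_gt_max' (hvne j (by omega))
      rw [Fin.lt_def, htop j (by omega)]
      rw [Fin.lt_def, hylval] at hw
      omega
    have h2 := premTS_degreeOf_le hL1vne I0 h1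
    have h3 : I0.degreeOf w = 0 := degreeOf_eq_zero_of_gt_max' hvneI0 (by
      rw [hI0top]; exact hw)
    omega
  have hR2deg : ∀ j, ∀ hj : j < len, j < k →
      R2.degreeOf ((Cs.getD j 0).vars.max' (hvne j hj)) <
        (Cs.getD j 0).degreeOf ((Cs.getD j 0).vars.max' (hvne j hj)) := by
    intro j hj hjk
    by_cases hjl : j ≤ l
    · have hmem : Cs.getD j 0 ∈ Cs.take (l+1) := by
        refine List.mem_iff_getElem.mpr ⟨j, ?_, ?_⟩
        · simp only [List.length_take]
          omega
        · rw [List.getElem_take, List.getD_eq_getElem Cs 0 hj]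
      exact premTS_degreeOf_lt hL1vne (hLpair (l+1)) I0 hmem (hvne j hj)
    · have hw : yl < (Cs.getD j 0).vars.max' (hvne j hj) := by
        rw [Fin.lt_def, hylval, htop j hj]
        omega
      have h1 := hR2high _ hw
      have h2 := hd1 j hj
      omega
  have partA : premTS I0 (Cs.take k) = 0 := by
    rw [hsplit]
    by_contra hR2ne
    obtain ⟨J2, B3, hrep2, hmem2, hJ2ne, hJ2deg⟩ := premTS_rep hL1vne I0
    rw [← hR2def] at hrep2
    set T0 := Cs.getD k 0 - I0 * X y ^ d with hT0def
    set V := R2 * X y ^ d + J2 * T0 with hVdef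
    have hVeq : V = J2 * (Cs.getD k 0) - B3 * X y ^ d := by
      rw [hVdef, hT0def, hrep2]; ring
    have hVI : V ∈ Idl := by
      rw [hVeq]
      refine Ideal.sub_mem _ (Ideal.mul_mem_left _ _ (hCI k hkr))
        (Ideal.mul_mem_right _ _ ?_)
      have hsle : Ideal.span {T | T ∈ Cs.take (l+1)} ≤ Idl := by
        rw [Ideal.span_le]
        intro x hx
        obtain ⟨j, hj, rfl⟩ := hLidx (l+1) (by omega) x hx
        exact hCI j (by omega)
      exact hsle hmem2
    have hJ2zero : ∀ w : Fin n, yl < w → J2.degreeOf w = 0 := by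
      intro w hw
      apply hJ2deg
      intro T hT
      obtain ⟨j, hj, rfl⟩ := hLidx (l+1) (by omega) T hT
      have h1 : (Cs.getD j 0).degreeOf w = 0 := by
        apply degreeOf_eq_zero_of_gt_max' (hvne j (by omega))
        rw [Fin.lt_def, htop j (by omega)]
        rw [Fin.lt_def, hylval] at hw
        omega
      have := degreeOf_ini_le (hvne j (by omega)) w
      omega
    have hT0y : T0.degreeOf y < d := by
      rw [hT0def, hI0c, hddef]
      exact tail_degreeOf_lt hd1k
    have hT0w : ∀ w, y < w → T0.degreeOf w = 0 := by
      intro w hw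
      have h4 : (Cs.getD k 0).degreeOf w = 0 := degreeOf_eq_zero_of_gt_max' hvneP0 hw
      have h5 : I0.degreeOf w = 0 := degreeOf_eq_zero_of_gt_max' hvneI0 (by
        rw [hI0top]; exact lt_trans hyly hw)
      have h6 : ((X y : MvPolynomial (Fin n) K) ^ d).degreeOf w = 0 :=
        degreeOf_X_pow_ne (ne_of_lt hw).symm d
      have h7 := MvPolynomial.degreeOf_mul_le w I0 ((X y) ^ d)
      have h8 := degreeOf_sub_le w (Cs.getD k 0) (I0 * (X y) ^ d)
      rw [← hT0def] at h8
      omega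
    have hWbound : ∀ m ∈ (J2 * T0).support, m y < d ∧ ∀ w, y < w → m w = 0 := by
      intro m hm
      constructor
      · have h1 := supp_coord_le_degreeOf hm y
        have h2 := MvPolynomial.degreeOf_mul_le y J2 T0
        have h3 : J2.degreeOf y = 0 := hJ2zero y hyly
        omega
      · intro w hw
        have h1 := supp_coord_le_degreeOf hm w
        have h2 := MvPolynomial.degreeOf_mul_le w J2 T0
        have h3 : J2.degreeOf w = 0 := hJ2zero w (lt_trans hyly hw)
        have h4 := hT0w w hw
        omega
    have hR2above : ∀ m ∈ R2.support, ∀ w, y ≤ w → m w = 0 := by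
      intro m hm w hw
      have h1 := supp_coord_le_degreeOf hm w
      have h2 := hR2high w (lt_of_lt_of_le hyly hw)
      omega
    obtain ⟨mR2, hmR2⟩ := exists_isLpp hR2ne
    have hlppV : IsLpp V (mR2 + Finsupp.single y d) := by
      rw [hVdef]
      exact isLpp_mul_X_pow_add hmR2 hR2above hWbound
    have hVne : V ≠ 0 := by
      intro h
      rw [h] at hlppV
      simpa using hlppV.1
    obtain ⟨j, hj, mg, hle, hdegle, hzero, hminclause⟩ := KEY V _ hVI hlppV
    have hlef := Finsupp.le_def.mp hle
    rcases lt_trichotomy j k with hjk | hjk | hjk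
    · -- j < k
      have hytop : y ≠ (Cs.getD j 0).vars.max' (hvne j hj) := by
        intro he
        have := congrArg (fun v : Fin n => (v : ℕ)) he
        simp only [hyval, htop j hj] at this
        omega
      have hmv : (mR2 + Finsupp.single y d) ((Cs.getD j 0).vars.max' (hvne j hj)) =
          mR2 ((Cs.getD j 0).vars.max' (hvne j hj)) := by
        rw [Finsupp.add_apply, Finsupp.single_apply, if_neg hytop, add_zero]
      have h1 := hlef ((Cs.getD j 0).vars.max' (hvne j hj))
      rw [hmv] at h1
      have h2 := supp_coord_le_degreeOf hmR2.1 ((Cs.getD j 0).vars.max' (hvne j hj))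
      have h3 := hR2deg j hj hjk
      omega
    · -- j = k
      subst hjk
      obtain ⟨mI0, hmI0⟩ := exists_isLpp hI0ne
      have hI0above : ∀ m ∈ I0.support, ∀ w, y ≤ w → m w = 0 := fun m hm w hw =>
        supp_zero_above_max' hvneI0 m hm w (by rw [hI0top]; exact lt_of_lt_of_le hyly hw)
      have hT0bound : ∀ m ∈ T0.support, m y < d ∧ ∀ w, y < w → m w = 0 := by
        intro m hm
        refine ⟨?_, fun w hw => ?_⟩
        · have h1 := supp_coord_le_degreeOf hm y
          omega
        · have h1 := supp_coord_le_degreeOf hm w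
          have h2 := hT0w w hw
          omega
      have hlppP0 : IsLpp (Cs.getD j 0) (mI0 + Finsupp.single y d) := by
        have heq : Cs.getD j 0 = I0 * X y ^ d + T0 := by rw [hT0def]; ring
        rw [heq]
        exact isLpp_mul_X_pow_add hmI0 hI0above hT0bound
      have hstep : plexLT mR2 mI0 := by
        refine ⟨yl, ?_, ?_⟩
        · have h1 := supp_coord_le_degreeOf hmR2.1 yl
          have h2 : R2.degreeOf yl < (Cs.getD l 0).degreeOf yl := hR2deg l hl hlk
          have h3 := isLpp_top_coord hvneI0 hmI0
          rw [hI0top] at h3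
          omega
        · intro j2 hj2
          have h5 := supp_coord_le_degreeOf hmR2.1 j2
          have h6 := hR2high j2 hj2
          have h7 := supp_zero_above_max' hvneI0 mI0 hmI0.1 j2 (by rw [hI0top]; exact hj2)
          omega
      have hVlt : plexLT (mR2 + Finsupp.single y d) (mI0 + Finsupp.single y d) :=
        plexLT_add_right _ hstep
      rcases hminclause (mI0 + Finsupp.single y d) hlppP0 with he | hlt
      · rcases plexLE_of_le hle with he2 | hlt2
        · rw [he, he2] at hVlt
          exact plexLT_irrefl _ hVlt
        · rw [← he] at hlt2
          exact plexLT_asymm hlt2 hVlt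
      · rcases plexLE_of_le hle with he2 | hlt2
        · rw [he2] at hlt
          exact plexLT_asymm hlt hVlt
        · exact plexLT_asymm (plexLT_trans hlt hlt2) hVlt
    · -- j > k
      have hytop : y ≠ (Cs.getD j 0).vars.max' (hvne j hj) := by
        intro he
        have := congrArg (fun v : Fin n => (v : ℕ)) he
        simp only [hyval, htop j hj] at this
        omega
      have hmv : (mR2 + Finsupp.single y d) ((Cs.getD j 0).vars.max' (hvne j hj)) =
          mR2 ((Cs.getD j 0).vars.max' (hvne j hj)) := by
        rw [Finsupp.add_apply, Finsupp.single_apply, if_neg hytop, add_zero]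
      have h1 := hlef ((Cs.getD j 0).vars.max' (hvne j hj))
      rw [hmv] at h1
      have h2 := supp_coord_le_degreeOf hmR2.1 ((Cs.getD j 0).vars.max' (hvne j hj))
      have h3 : R2.degreeOf ((Cs.getD j 0).vars.max' (hvne j hj)) = 0 := by
        apply hR2high
        rw [Fin.lt_def, hylval, htop j hj]
        omega
      have h4 := hd1 j hj
      omega
  -- Part B & C
  have hLvneK : ∀ T ∈ Cs.take k, T.vars.Nonempty := hLvne k (le_of_lt hkr)
  have hydeg0 : ∀ T ∈ Cs.take k, T.degreeOf y = 0 := by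
    intro T hT
    obtain ⟨j2, hj2, rfl⟩ := hLidx k (le_of_lt hkr) T hT
    apply degreeOf_eq_zero_of_gt_max' (hvne j2 (by omega))
    rw [Fin.lt_def, htop j2 (by omega), hyval]
    omega
  have hnormIdx : ∀ i2 j2, j2 < i2 → i2 < k →
      degLv (ini (Cs.getD i2 0)) (Cs.getD j2 0) = 0 := by
    intro i2 j2 hji hik
    have hlt : (Cs.take k).length = k := by
      rw [List.length_take]
      omega
    have hpw := List.pairwise_iff_getElem.mp hnorm.2 j2 i2
      (by omega) (by omega) hji
    simp only [List.getElem_take] at hpw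
    rw [List.getD_eq_getElem Cs 0 (show i2 < Cs.length by omega),
      List.getD_eq_getElem Cs 0 (show j2 < Cs.length by omega)]
    exact hpw
  have partC : premTS (Cs.getD k 0) (Cs.take k) = 0 := by
    obtain ⟨J1, B1, hrep1, hmem1, hJ1ne, hJ1deg⟩ := premTS_rep hLvneK (Cs.getD k 0)
    set R1 := premTS (Cs.getD k 0) (Cs.take k) with hR1def
    have hspanK : Ideal.span {T | T ∈ Cs.take k} ≤ Idl := by
      rw [Ideal.span_le]
      intro x hx
      obtain ⟨j2, hj2, rfl⟩ := hLidx k (le_of_lt hkr) x hx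
      exact hCI j2 (by omega)
    have hR1I : R1 ∈ Idl := by
      rw [hrep1]
      exact Ideal.sub_mem _ (Ideal.mul_mem_left _ _ (hCI k hkr)) (hspanK hmem1)
    have hR1y : R1.degreeOf y ≤ d := by
      rw [hR1def, hddef]
      exact premTS_degreeOf_le hLvneK _ hydeg0
    have hR1w : ∀ w, y < w → R1.degreeOf w = 0 := by
      intro w hw
      have h1 : ∀ T ∈ Cs.take k, T.degreeOf w = 0 := by
        intro T hT
        obtain ⟨j2, hj2, rfl⟩ := hLidx k (le_of_lt hkr) T hT
        apply degreeOf_eq_zero_of_gt_max' (hvne j2 (by omega))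
        rw [Fin.lt_def, htop j2 (by omega)]
        rw [Fin.lt_def, hyval] at hw
        omega
      have h2 := premTS_degreeOf_le hLvneK (Cs.getD k 0) h1
      have h3 : (Cs.getD k 0).degreeOf w = 0 := degreeOf_eq_zero_of_gt_max' hvneP0 hw
      rw [hR1def]
      omega
    have hR1deg : ∀ j2, ∀ hj2 : j2 < len, j2 < k →
        R1.degreeOf ((Cs.getD j2 0).vars.max' (hvne j2 hj2)) <
          (Cs.getD j2 0).degreeOf ((Cs.getD j2 0).vars.max' (hvne j2 hj2)) := by
      intro j2 hj2 hj2k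
      have hmem : Cs.getD j2 0 ∈ Cs.take k := by
        refine List.mem_iff_getElem.mpr ⟨j2, ?_, ?_⟩
        · rw [List.length_take]
          omega
        · rw [List.getElem_take, List.getD_eq_getElem Cs 0 hj2]
      rw [hR1def]
      exact premTS_degreeOf_lt hLvneK (hLpair k) _ hmem (hvne j2 hj2)
    set S := coefv y d R1 with hSdef
    have hJ1y : J1.degreeOf y = 0 := by
      apply hJ1deg
      intro T hT
      have h0 := hydeg0 T hT
      have hvT := hLvneK T hT
      have := degreeOf_ini_le hvT y
      omega
    have hSrep : S = J1 * I0 - coefv y d B1 := by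
      rw [hSdef, hrep1, coefv_sub, coefv_mul_left hJ1y, ← hI0c]
    obtain ⟨J2, B2, hrep2, hmem2, hJ2ne, hJ2deg⟩ := premTS_rep hLvneK I0
    rw [partA] at hrep2
    have hJ2I0 : J2 * I0 = B2 := sub_eq_zero.mp hrep2.symm
    have hJ2I0mem : J2 * I0 ∈ Ideal.span {T | T ∈ Cs.take k} := by
      rw [hJ2I0]; exact hmem2
    have hB1mem : coefv y d B1 ∈ Ideal.span {T | T ∈ Cs.take k} :=
      coefv_mem_span (fun T hT => hydeg0 T hT) hmem1 d
    have hJ2S : J2 * S ∈ Ideal.span {T | T ∈ Cs.take k} := by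
      rw [hSrep, mul_sub]
      refine Ideal.sub_mem _ ?_ (Ideal.mul_mem_left _ _ hB1mem)
      rw [show J2 * (J1 * I0) = J1 * (J2 * I0) by ring]
      exact Ideal.mul_mem_left _ _ hJ2I0mem
    have hJ2tops : ∀ j2, ∀ hj2 : j2 < len,
        J2.degreeOf ((Cs.getD j2 0).vars.max' (hvne j2 hj2)) = 0 := by
      intro j2 hj2
      apply hJ2deg
      intro T hT
      obtain ⟨i2, hi2, rfl⟩ := hLidx k (le_of_lt hkr) T hT
      rcases lt_trichotomy i2 j2 with hc | hc | hc
      · have h1 : (Cs.getD i2 0).degreeOf ((Cs.getD j2 0).vars.max' (hvne j2 hj2)) = 0 := by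
          apply degreeOf_eq_zero_of_gt_max' (hvne i2 (by omega))
          rw [Fin.lt_def, htop i2 (by omega), htop j2 hj2]
          omega
        have := degreeOf_ini_le (hvne i2 (by omega)) ((Cs.getD j2 0).vars.max' (hvne j2 hj2))
        omega
      · subst hc
        exact degreeOf_ini_top (hvne i2 (by omega))
      · have hpw := hnormIdx i2 j2 hc hi2
        rw [degLv, dif_pos (hvne j2 hj2)] at hpw
        exact hpw
    have hS0 : S = 0 := by
      by_contra hSne
      have hJ2Sne : J2 * S ≠ 0 := mul_ne_zero hJ2ne hSne
      obtain ⟨mS, hmS⟩ := exists_isLpp hJ2Sne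
      obtain ⟨j2, hj2, mg, hle, hdegle, hzero, hminclause⟩ := KEY (J2 * S) mS (hspanK hJ2S) hmS
      have hlef := Finsupp.le_def.mp hle
      have h1 := hlef ((Cs.getD j2 0).vars.max' (hvne j2 hj2))
      have h2 := supp_coord_le_degreeOf hmS.1 ((Cs.getD j2 0).vars.max' (hvne j2 hj2))
      have h3 := MvPolynomial.degreeOf_mul_le ((Cs.getD j2 0).vars.max' (hvne j2 hj2)) J2 S
      have h4 := hJ2tops j2 hj2
      have h5 : S.degreeOf ((Cs.getD j2 0).vars.max' (hvne j2 hj2)) ≤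
          R1.degreeOf ((Cs.getD j2 0).vars.max' (hvne j2 hj2)) := by
        rw [hSdef]
        exact degreeOf_coefv_le y d R1 _
      rcases lt_trichotomy j2 k with hc | hc | hc
      · have h6 := hR1deg j2 hj2 hc
        omega
      · subst hc
        have heq : (Cs.getD j2 0).vars.max' (hvne j2 hj2) = y := rfl
        rw [heq] at h1 h2 h3 h4 hdegle
        have h7 : S.degreeOf y = 0 := by
          rw [hSdef]
          exact degreeOf_coefv_self y d R1
        rw [← hddef] at hdegle
        omega
      · have h6 : R1.degreeOf ((Cs.getD j2 0).vars.max' (hvne j2 hj2)) = 0 := by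
          apply hR1w
          rw [Fin.lt_def, hyval, htop j2 hj2]
          omega
        have h7 := hd1 j2 hj2
        omega
    by_contra hR1ne
    have hR1yd : R1.degreeOf y < d := by
      have h1 := coefv_degreeOf_ne_zero (i := y) hR1ne
      by_contra hc
      have he : R1.degreeOf y = d := by omega
      rw [he] at h1
      rw [← hSdef] at h1
      exact h1 hS0
    obtain ⟨mR1, hmR1⟩ := exists_isLpp hR1ne
    obtain ⟨j2, hj2, mg, hle, hdegle, hzero, hminclause⟩ := KEY R1 mR1 hR1I hmR1
    have hlef := Finsupp.le_def.mp hle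
    have h1 := hlef ((Cs.getD j2 0).vars.max' (hvne j2 hj2))
    have h2 := supp_coord_le_degreeOf hmR1.1 ((Cs.getD j2 0).vars.max' (hvne j2 hj2))
    rcases lt_trichotomy j2 k with hc | hc | hc
    · have h3 := hR1deg j2 hj2 hc
      omega
    · subst hc
      have heq : (Cs.getD j2 0).vars.max' (hvne j2 hj2) = y := rfl
      rw [heq] at h1 h2 hdegle
      rw [← hddef] at hdegle
      omega
    · have h3 : R1.degreeOf ((Cs.getD j2 0).vars.max' (hvne j2 hj2)) = 0 := by
        apply hR1w
        rw [Fin.lt_def, hyval, htop j2 hj2]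
        omega
      have h4 := hd1 j2 hj2
      omega
  exact ⟨partA, partC⟩

end CharSets
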